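/- Let x, t > 0 and λ ∈ ℂ \ {0} with Im λ ≥ 0, and let a_λ = 2|μ|/|λ|. Then: (a) if t ≤ x < a_λ then N(x,t,λ) = (tλ)^{−2μ}·B; (b) if t < a_λ ≤ x then every entry of N(x,t,λ) has modulus at most e^{2π|Im μ|}·(|λ|·t)^{−2Re μ}; (c) if a_λ ≤ t ≤ x then every entry of N(x,t,λ) has modulus at most 1. -/

import Mathlib

open Complex Matrix Set

noncomputable def Bmat : Matrix (Fin 2) (Fin 2) ℂ := !![0, 1; -1, 0]

/-- `R₁ = i` (index 0), `R₂ = -i` (index 1). -/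
noncomputable def Rcoef : Fin 2 → ℂ := ![Complex.I, -Complex.I]

/-- `F_j(w) = w^{-μ}` for `|w| < 2|μ|`, `F_j(w) = e^{R_j w}` for `|w| ≥ 2|μ|`. -/
noncomputable def Ffun (μ : ℂ) (j : Fin 2) (w : ℂ) : ℂ :=
  if ‖w‖ < 2 * ‖μ‖ then w ^ (-μ) else Complex.exp (Rcoef j * w)

/-- `F(w) = diag(F₁(w), F₂(w))`. -/
noncomputable def Fmat (μ : ℂ) (w : ℂ) : Matrix (Fin 2) (Fin 2) ℂ :=
  Matrix.diagonal (fun j => Ffun μ j w)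

/-- `N(x,t,λ) = F(xλ) B F(tλ) · (F₂(tλ)/F₂(xλ))`. -/
noncomputable def Nmat (μ : ℂ) (x t : ℝ) (lam : ℂ) : Matrix (Fin 2) (Fin 2) ℂ :=
  (Ffun μ 1 ((t : ℂ) * lam) / Ffun μ 1 ((x : ℂ) * lam)) •
    (Fmat μ ((x : ℂ) * lam) * Bmat * Fmat μ ((t : ℂ) * lam))

lemma norm_cpow_neg_le {w : ℂ} (hw : w ≠ 0) (μ : ℂ) :
    ‖w ^ (-μ)‖ ≤ Real.exp (Real.pi * |μ.im|) * ‖w‖ ^ (-μ.re) := by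
  rw [Complex.norm_cpow_of_ne_zero hw]
  have h1 : w.arg * μ.im ≤ Real.pi * |μ.im| := by
    calc w.arg * μ.im ≤ |w.arg * μ.im| := le_abs_self _
      _ = |w.arg| * |μ.im| := abs_mul _ _
      _ ≤ Real.pi * |μ.im| := by
          exact mul_le_mul_of_nonneg_right (Complex.abs_arg_le_pi w) (abs_nonneg _)
  have h2 : w.arg * (-μ).im = -(w.arg * μ.im) := by simp [mul_neg]
  rw [h2, Real.exp_neg, div_eq_mul_inv, inv_inv]
  simp only [neg_re]
  rw [mul_comm (Real.exp _)]
  exact mul_le_mul_of_nonneg_left (Real.exp_le_exp.2 h1) (Real.rpow_nonneg (norm_nonneg w) _)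

lemma sq_bound {w : ℂ} (hw : w ≠ 0) (μ : ℂ) :
    ‖w ^ (-μ)‖ * ‖w ^ (-μ)‖ ≤ Real.exp (2 * Real.pi * |μ.im|) * ‖w‖ ^ (-(2 * μ.re)) := by
  have hb := norm_cpow_neg_le hw μ
  have hpos : (0:ℝ) < ‖w‖ := norm_pos_iff.2 hw
  have h2 : Real.exp (2 * Real.pi * |μ.im|) * ‖w‖ ^ (-(2 * μ.re)) =
      (Real.exp (Real.pi * |μ.im|) * ‖w‖ ^ (-μ.re)) *
      (Real.exp (Real.pi * |μ.im|) * ‖w‖ ^ (-μ.re)) := by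
    rw [show -(2*μ.re) = -μ.re + -μ.re by ring, Real.rpow_add hpos,
      show 2*Real.pi*|μ.im| = Real.pi*|μ.im| + Real.pi*|μ.im| by ring, Real.exp_add]
    ring
  rw [h2]
  exact mul_le_mul hb hb (norm_nonneg _) (by positivity)

theorem stmt12 (μ : ℂ) (hμ : 0 < μ.re) (x t : ℝ) (hx : 0 < x) (ht : 0 < t)
    (lam : ℂ) (hlam : lam ≠ 0) (hIm : 0 ≤ lam.im) :
    (t ≤ x → x < 2 * ‖μ‖ / ‖lam‖ →
      Nmat μ x t lam = (((t : ℂ) * lam) ^ (-(2 * μ))) • Bmat) ∧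
    (t < 2 * ‖μ‖ / ‖lam‖ → 2 * ‖μ‖ / ‖lam‖ ≤ x →
      ∀ i j : Fin 2, ‖Nmat μ x t lam i j‖ ≤
        Real.exp (2 * Real.pi * |μ.im|) * (‖lam‖ * t) ^ (-(2 * μ.re))) ∧
    (2 * ‖μ‖ / ‖lam‖ ≤ t → t ≤ x →
      ∀ i j : Fin 2, ‖Nmat μ x t lam i j‖ ≤ 1) := by
  have hl : (0:ℝ) < ‖lam‖ := norm_pos_iff.2 hlam
  have hnx : ‖(x:ℂ) * lam‖ = x * ‖lam‖ := by
    rw [norm_mul, Complex.norm_real, Real.norm_eq_abs, abs_of_pos hx]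
  have hnt : ‖(t:ℂ) * lam‖ = t * ‖lam‖ := by
    rw [norm_mul, Complex.norm_real, Real.norm_eq_abs, abs_of_pos ht]
  have hwx : (x:ℂ) * lam ≠ 0 := by
    simp [hlam, Complex.ofReal_ne_zero, ne_of_gt hx]
  have hwt : (t:ℂ) * lam ≠ 0 := by
    simp [hlam, Complex.ofReal_ne_zero, ne_of_gt ht]
  have e1 : ∀ r : ℝ, ‖Complex.exp (Complex.I * ((r:ℂ) * lam))‖
      = Real.exp (-(r * lam.im)) := by
    intro r
    rw [Complex.norm_exp]
    congr 1
    simp [Complex.mul_re, Complex.mul_im]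
  have e2 : ∀ r : ℝ, ‖Complex.exp (-(Complex.I * ((r:ℂ) * lam)))‖
      = Real.exp (r * lam.im) := by
    intro r
    rw [Complex.norm_exp]
    congr 1
    simp [Complex.mul_re, Complex.mul_im]
  refine ⟨?_, ?_, ?_⟩
  · -- (a)
    intro htx hxa
    have hxs : ‖(x:ℂ) * lam‖ < 2 * ‖μ‖ := by
      rw [hnx]; exact (lt_div_iff₀ hl).1 hxa
    have hts : ‖(t:ℂ) * lam‖ < 2 * ‖μ‖ := by
      rw [hnt]
      exact lt_of_le_of_lt (mul_le_mul_of_nonneg_right htx hl.le) (hnx ▸ hxs)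
    have hne : ((x:ℂ) * lam) ^ (-μ) ≠ 0 := by
      simp [Complex.cpow_eq_zero_iff, hwx]
    have hc : ((t:ℂ)*lam) ^ (-μ) * ((t:ℂ)*lam) ^ (-μ) = ((t:ℂ)*lam) ^ (-(2*μ)) := by
      rw [← Complex.cpow_add _ _ hwt]; ring_nf
    have Fx : ∀ j, Ffun μ j ((x:ℂ)*lam) = ((x:ℂ)*lam) ^ (-μ) := fun j => if_pos hxs
    have Ft : ∀ j, Ffun μ j ((t:ℂ)*lam) = ((t:ℂ)*lam) ^ (-μ) := fun j => if_pos hts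
    ext i j
    fin_cases i <;> fin_cases j <;>
      simp only [Nmat, Matrix.smul_apply, smul_eq_mul, Fmat, Matrix.diagonal_mul,
        Matrix.mul_diagonal, Fx, Ft, Bmat] <;>
      simp [Matrix.cons_val_zero, Matrix.cons_val_one] <;>
      rw [div_mul_eq_mul_div, div_eq_iff hne] <;>
      linear_combination (((x:ℂ)*lam) ^ (-μ)) * hc
  · -- (b)
    intro hta hax
    have hts : ‖(t:ℂ) * lam‖ < 2 * ‖μ‖ := by
      rw [hnt]; exact (lt_div_iff₀ hl).1 hta
    have hxs : ¬ (‖(x:ℂ) * lam‖ < 2 * ‖μ‖) := by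
      rw [hnx]; exact not_lt.2 ((div_le_iff₀ hl).1 hax)
    have Fx : ∀ j, Ffun μ j ((x:ℂ)*lam) = Complex.exp (Rcoef j * ((x:ℂ)*lam)) :=
      fun j => if_neg hxs
    have Ft : ∀ j, Ffun μ j ((t:ℂ)*lam) = ((t:ℂ)*lam) ^ (-μ) := fun j => if_pos hts
    have hsq := sq_bound hwt μ
    rw [hnt, mul_comm t ‖lam‖] at hsq
    have hrhs : (0:ℝ) ≤ Real.exp (2 * Real.pi * |μ.im|) * (‖lam‖ * t) ^ (-(2 * μ.re)) := by
      positivity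
    intro i j
    fin_cases i <;> fin_cases j <;>
      simp only [Nmat, Matrix.smul_apply, smul_eq_mul, Fmat, Matrix.diagonal_mul,
        Matrix.mul_diagonal, Fx, Ft, Bmat, Rcoef] <;>
      simp [Matrix.cons_val_zero, Matrix.cons_val_one]
    · positivity
    · -- entry (0,1)
      rw [e1 x, e2 x, div_mul_eq_mul_div, div_le_iff₀ (Real.exp_pos _)]
      have hE1 : Real.exp (-(x * lam.im)) ≤ 1 := Real.exp_le_one_iff.2 (by nlinarith)
      have hE2 : (1:ℝ) ≤ Real.exp (x * lam.im) := Real.one_le_exp (by positivity)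
      have hA : 0 ≤ ‖((t:ℂ) * lam) ^ (-μ)‖ := norm_nonneg _
      nlinarith [hsq, mul_nonneg hA hA, hrhs, hE1, hE2,
        mul_le_mul_of_nonneg_left hE2 hrhs,
        mul_le_mul_of_nonneg_right hE1 (mul_nonneg hA hA)]
    · -- entry (1,0)
      rw [e2 x, div_mul_eq_mul_div, div_le_iff₀ (Real.exp_pos _)]
      nlinarith [mul_le_mul_of_nonneg_right hsq (Real.exp_pos (x * lam.im)).le]
    · positivity
  · -- (c)
    intro hta htx
    have hts : ¬ (‖(t:ℂ) * lam‖ < 2 * ‖μ‖) := by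
      rw [hnt]; exact not_lt.2 ((div_le_iff₀ hl).1 hta)
    have hxs : ¬ (‖(x:ℂ) * lam‖ < 2 * ‖μ‖) := by
      rw [hnx]
      exact not_lt.2 (le_trans ((div_le_iff₀ hl).1 hta) (mul_le_mul_of_nonneg_right htx hl.le))
    have Fx : ∀ j, Ffun μ j ((x:ℂ)*lam) = Complex.exp (Rcoef j * ((x:ℂ)*lam)) :=
      fun j => if_neg hxs
    have Ft : ∀ j, Ffun μ j ((t:ℂ)*lam) = Complex.exp (Rcoef j * ((t:ℂ)*lam)) :=
      fun j => if_neg hts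
    intro i j
    fin_cases i <;> fin_cases j <;>
      simp only [Nmat, Matrix.smul_apply, smul_eq_mul, Fmat, Matrix.diagonal_mul,
        Matrix.mul_diagonal, Fx, Ft, Bmat, Rcoef] <;>
      simp [Matrix.cons_val_zero, Matrix.cons_val_one]
    · -- entry (0,1)
      rw [e1 x, e2 x, e2 t, div_mul_eq_mul_div, div_le_one (Real.exp_pos _),
        ← Real.exp_add, ← Real.exp_add]
      exact Real.exp_le_exp.2 (by nlinarith [mul_le_mul_of_nonneg_right htx hIm])
    · -- entry (1,0)
      rw [e2 t, e2 x, e1 t, div_mul_eq_mul_div, div_le_one (Real.exp_pos _),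
        ← Real.exp_add, ← Real.exp_add]
      exact Real.exp_le_exp.2 (by nlinarith)
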